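/- arXiv:2602.03346 — 2 statements merged into one kernel-verified Lean document; each statement's English description precedes it below -/
import Mathlib

section
/- Let A ∈ ℝ_ε^{n×m}, B ∈ ℝ_⊤^{m×p} be regular and C, D ∈ ℝ^{p×n}. Suppose every row sum of the matrix [C D] ∈ ℝ^{p×2n} equals 1, i.e., (C + D)·𝟏 = 𝟏. If x, w ∈ ℝ^n satisfy x = A ⊗ (B ⊗' (C·x' + D·w)) whenever x' plays the role of the previous state, then the system map f(x', w) = A ⊗ (B ⊗' (C·x' + D·w)) satisfies f(x' + h𝟏, w + h𝟏) = f(x', w) + h𝟏 for all h ∈ ℝ. -/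
noncomputable def erealAddIso (h : ℝ) : EReal ≃o EReal where
  toFun z := z + (h : EReal)
  invFun z := z - (h : EReal)
  left_inv z := EReal.add_sub_cancel_right
  right_inv z := EReal.sub_add_cancel
  map_rel_iff' := by
    intro a b
    exact (EReal.addLECancellable_coe h).add_le_add_iff_right

lemma ereal_iSup_add_coe {ι : Sort*} (f : ι → EReal) (h : ℝ) :
    (⨆ i, f i + (h : EReal)) = (⨆ i, f i) + (h : EReal) :=
  ((erealAddIso h).map_iSup f).symm

lemma ereal_iInf_add_coe {ι : Sort*} (f : ι → EReal) (h : ℝ) :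
    (⨅ i, f i + (h : EReal)) = (⨅ i, f i) + (h : EReal) :=
  ((erealAddIso h).map_iInf f).symm

theorem stmt_6 (n m p : ℕ)
    (A : Fin n → Fin m → EReal) (B : Fin m → Fin p → EReal)
    (C D : Matrix (Fin p) (Fin n) ℝ)
    (hAtop : ∀ i j, A i j ≠ ⊤) (hAreg : ∀ i, ∃ j, A i j ≠ ⊥)
    (hBbot : ∀ j l, B j l ≠ ⊥) (hBreg : ∀ j, ∃ l, B j l ≠ ⊤)
    (hrow : ∀ l : Fin p, (∑ i, C l i) + (∑ i, D l i) = 1) :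
    ∀ (x' w : Fin n → ℝ) (h : ℝ) (i : Fin n),
      (⨆ j, A i j + ⨅ l, B j l +
          (((C.mulVec (x' + fun _ => h) + D.mulVec (w + fun _ => h)) l : ℝ) : EReal))
        = (⨆ j, A i j + ⨅ l, B j l + (((C.mulVec x' + D.mulVec w) l : ℝ) : EReal))
            + (h : EReal) := by
  intro x' w h i
  have key : ∀ l, (C.mulVec (x' + fun _ => h) + D.mulVec (w + fun _ => h)) l
      = (C.mulVec x' + D.mulVec w) l + h := by
    intro l
    have := hrow l
    simp only [Pi.add_apply, Matrix.mulVec, dotProduct, mul_add,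
      Finset.sum_add_distrib, ← Finset.sum_mul]
    linear_combination h * (hrow l)
  rw [← ereal_iSup_add_coe]
  congr 1; funext j
  rw [add_assoc, ← ereal_iInf_add_coe]
  refine congrArg _ (iInf_congr fun l => ?_)
  rw [key l, EReal.coe_add, ← add_assoc]
end

section
/- Under the hypotheses of the previous support lemma, if additionally T·S_A·S_B·S_D·T⁻¹ is strictly lower triangular for a permutation matrix T, then T·(G_A·G_B·D)·T⁻¹ is strictly lower triangular, and hence I - G_A·G_B·D is invertible. -/
theorem stmt_11 (n m p : ℕ)
    (SA GA : Matrix (Fin n) (Fin m) ℝ) (SB GB : Matrix (Fin m) (Fin p) ℝ)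
    (D : Matrix (Fin p) (Fin n) ℝ) (SD : Matrix (Fin p) (Fin n) ℝ)
    (T : Matrix (Fin n) (Fin n) ℝ)
    (hSA01 : ∀ i j, SA i j = 0 ∨ SA i j = 1)
    (hSB01 : ∀ j l, SB j l = 0 ∨ SB j l = 1)
    (hGA01 : ∀ i j, GA i j = 0 ∨ GA i j = 1)
    (hGB01 : ∀ j l, GB j l = 0 ∨ GB j l = 1)
    (hGArow : ∀ i, ∃! j, GA i j = 1)
    (hGBrow : ∀ j, ∃! l, GB j l = 1)
    (hGA : ∀ i j, GA i j ≤ SA i j)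
    (hGB : ∀ j l, GB j l ≤ SB j l)
    (hSD : ∀ l q, SD l q = if D l q ≠ 0 then 1 else 0)
    (hT01 : ∀ i j, T i j = 0 ∨ T i j = 1)
    (hTrow : ∀ i, ∃! j, T i j = 1)
    (hTcol : ∀ j, ∃! i, T i j = 1)
    (hlow : ∀ i j : Fin n, i ≤ j → (T * (SA * SB * SD) * T⁻¹) i j = 0) :
    (∀ i j : Fin n, i ≤ j → (T * (GA * GB * D) * T⁻¹) i j = 0) ∧
      IsUnit (1 - GA * GB * D) := by
  -- nonnegativity facts
  have hSAnn : ∀ i j, 0 ≤ SA i j := fun i j => by rcases hSA01 i j with h | h <;> simp [h]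
  have hSBnn : ∀ i j, 0 ≤ SB i j := fun i j => by rcases hSB01 i j with h | h <;> simp [h]
  have hSDnn : ∀ i j, 0 ≤ SD i j := fun i j => by rw [hSD]; split <;> norm_num
  have hGAnn : ∀ i j, 0 ≤ GA i j := fun i j => by rcases hGA01 i j with h | h <;> simp [h]
  have hGBnn : ∀ i j, 0 ≤ GB i j := fun i j => by rcases hGB01 i j with h | h <;> simp [h]
  have hTnn : ∀ i j, 0 ≤ T i j := fun i j => by rcases hT01 i j with h | h <;> simp [h]
  -- key pointwise lemma : support of GA*GB*D inside support of SA*SB*SD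
  have key : ∀ k q, (SA * SB * SD) k q = 0 → (GA * GB * D) k q = 0 := by
    intro k q h0
    rw [Matrix.mul_apply] at h0
    have hnn : ∀ r ∈ (Finset.univ : Finset (Fin p)), 0 ≤ (SA * SB) k r * SD r q := by
      intro r _
      refine mul_nonneg ?_ (hSDnn r q)
      rw [Matrix.mul_apply]
      exact Finset.sum_nonneg fun l _ => mul_nonneg (hSAnn k l) (hSBnn l r)
    have hterm : ∀ r ∈ Finset.univ, (SA * SB) k r * SD r q = 0 :=
      (Finset.sum_eq_zero_iff_of_nonneg hnn).mp h0
    rw [Matrix.mul_apply]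
    apply Finset.sum_eq_zero
    intro r _
    rcases mul_eq_zero.mp (hterm r (Finset.mem_univ r)) with hab | hd
    · -- (SA*SB) k r = 0, show (GA*GB) k r = 0
      apply mul_eq_zero_of_left
      rw [Matrix.mul_apply] at hab
      have hab' : ∀ l ∈ Finset.univ, SA k l * SB l r = 0 :=
        (Finset.sum_eq_zero_iff_of_nonneg
          (fun l _ => mul_nonneg (hSAnn k l) (hSBnn l r))).mp hab
      rw [Matrix.mul_apply]
      apply Finset.sum_eq_zero
      intro l _
      rcases mul_eq_zero.mp (hab' l (Finset.mem_univ l)) with h | h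
      · exact mul_eq_zero_of_left (le_antisymm (h ▸ hGA k l) (hGAnn k l)) _
      · exact mul_eq_zero_of_right _ (le_antisymm (h ▸ hGB l r) (hGBnn l r))
    · -- SD r q = 0 ⇒ D r q = 0
      apply mul_eq_zero_of_right
      by_contra hD
      rw [hSD r q, if_pos hD] at hd
      exact one_ne_zero hd
  -- T * Tᵀ = 1
  have hTT : T * T.transpose = 1 := by
    ext i j
    rw [Matrix.mul_apply, Matrix.one_apply]
    by_cases hij : i = j
    · subst hij
      obtain ⟨k0, hk0, huk⟩ := hTrow i
      rw [if_pos rfl]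
      rw [Finset.sum_eq_single_of_mem k0 (Finset.mem_univ k0)]
      · simp [Matrix.transpose_apply, hk0]
      · intro k _ hk
        have : T i k = 0 := by
          rcases hT01 i k with h | h
          · exact h
          · exact absurd (huk k h) hk
        simp [this]
    · rw [if_neg hij]
      apply Finset.sum_eq_zero
      intro k _
      rcases hT01 i k with h | h
      · simp [h]
      · rcases hT01 j k with h' | h'
        · simp [Matrix.transpose_apply, h']
        · obtain ⟨i0, _, hui⟩ := hTcol k
          exact absurd ((hui i h).trans (hui j h').symm) hij
  have hTdet : IsUnit T.det := Matrix.isUnit_det_of_right_inverse hTT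
  have hTunit : IsUnit T := (Matrix.isUnit_iff_isUnit_det T).mpr hTdet
  have hinv : T⁻¹ = T.transpose := Matrix.inv_eq_right_inv hTT
  have hTinn : ∀ i j, 0 ≤ T⁻¹ i j := fun i j => by
    rw [hinv]; exact hTnn j i
  -- S' entries nonneg
  have hS'nn : ∀ k l, 0 ≤ (SA * SB * SD) k l := by
    intro k l
    rw [Matrix.mul_apply]
    exact Finset.sum_nonneg fun r _ => mul_nonneg
      (by rw [Matrix.mul_apply]; exact Finset.sum_nonneg fun s _ =>
        mul_nonneg (hSAnn k s) (hSBnn s r)) (hSDnn r l)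
  -- part 1
  have part1 : ∀ i j : Fin n, i ≤ j → (T * (GA * GB * D) * T⁻¹) i j = 0 := by
    intro i j hij
    have h0 := hlow i j hij
    rw [Matrix.mul_apply] at h0 ⊢
    have hnn : ∀ l ∈ (Finset.univ : Finset (Fin n)),
        0 ≤ (T * (SA * SB * SD)) i l * T⁻¹ l j := by
      intro l _
      refine mul_nonneg ?_ (hTinn l j)
      rw [Matrix.mul_apply]
      exact Finset.sum_nonneg fun k _ => mul_nonneg (hTnn i k) (hS'nn k l)
    have hterm : ∀ l ∈ Finset.univ, (T * (SA * SB * SD)) i l * T⁻¹ l j = 0 :=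
      (Finset.sum_eq_zero_iff_of_nonneg hnn).mp h0
    apply Finset.sum_eq_zero
    intro l _
    rcases mul_eq_zero.mp (hterm l (Finset.mem_univ l)) with hts | ht
    · apply mul_eq_zero_of_left
      rw [Matrix.mul_apply] at hts ⊢
      have hts' : ∀ k ∈ Finset.univ, T i k * (SA * SB * SD) k l = 0 :=
        (Finset.sum_eq_zero_iff_of_nonneg
          (fun k _ => mul_nonneg (hTnn i k) (hS'nn k l))).mp hts
      apply Finset.sum_eq_zero
      intro k _
      rcases mul_eq_zero.mp (hts' k (Finset.mem_univ k)) with h | h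
      · exact mul_eq_zero_of_left h _
      · exact mul_eq_zero_of_right _ (key k l h)
    · exact mul_eq_zero_of_right _ ht
  refine ⟨part1, ?_⟩
  -- invertibility
  set G := GA * GB * D with hG
  set M := T * G * T⁻¹ with hM
  have hMlow : ∀ i j : Fin n, i ≤ j → M i j = 0 := part1
  have h1M : IsUnit (1 - M) := by
    have hdet : (1 - M).det = 1 := by
      rw [Matrix.det_of_lowerTriangular]
      · apply Finset.prod_eq_one
        intro i _
        simp [Matrix.sub_apply, Matrix.one_apply, hMlow i i le_rfl]
      · intro i j hlt
        have : (i : Fin n) < j := hlt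
        simp [Matrix.sub_apply, Matrix.one_apply_ne (ne_of_lt this),
          hMlow i j this.le]
    rw [Matrix.isUnit_iff_isUnit_det, hdet]
    exact isUnit_one
  have hTiunit : IsUnit T⁻¹ := (Matrix.isUnit_iff_isUnit_det _).mpr
    (Matrix.isUnit_det_of_right_inverse (Matrix.nonsing_inv_mul T hTdet))
  have hfact : 1 - G = T⁻¹ * (1 - M) * T := by
    rw [hM, Matrix.mul_sub, Matrix.sub_mul, mul_one,
      Matrix.nonsing_inv_mul T hTdet]
    congr 1
    rw [show T⁻¹ * (T * G * T⁻¹) * T = (T⁻¹ * T) * G * (T⁻¹ * T) by noncomm_ring,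
      Matrix.nonsing_inv_mul T hTdet, one_mul, mul_one]
  rw [hfact]
  exact (hTiunit.mul h1M).mul hTunit
end
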